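/- For any non-commutative polynomial w in T(V) and any variables x, y, the non-commutative Hessian is symmetric: τ(∂²w/∂x∂y) = ∂²w/∂y∂x, where τ : T(V)⊗T(V) → T(V)⊗T(V) is the flip a⊗b ↦ b⊗a, provided w is taken modulo commutators (i.e., the identity holds when w is replaced by its cyclic sum, or equivalently as maps on Pot(V)). -/

import Mathlib

open scoped TensorProduct BigOperators
noncomputable section

/-- The free associative algebra on `n` (degree-one) variables, realized as the
monoid algebra of the free monoid on `Fin n`. -/
abbrev FA (k : Type*) [CommRing k] (n : ℕ) := MonoidAlgebra k (FreeMonoid (Fin n))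

namespace FA

variable {k : Type*} [CommRing k] {n : ℕ}

/-- The monomial (word) `x_{p 0} x_{p 1} ⋯` associated to a list of indices. -/
def word (p : List (Fin n)) : FA k n := MonoidAlgebra.single (FreeMonoid.ofList p) 1

/-- The generator `x_i`. -/
def X (i : Fin n) : FA k n := word [i]

/-- Cyclic sum of a monomial: `c(a_1⋯a_r) = ∑_i a_i⋯a_r a_1⋯a_{i-1}`. -/
def cycWord (p : List (Fin n)) : FA k n :=
  ∑ i ∈ Finset.range p.length, word (p.rotate i)

/-- Cyclic sum operator `c : T(V) → T(V)`, extended linearly from monomials. -/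
def cyc (f : FA k n) : FA k n :=
  f.coeff.sum fun p a => a • cycWord (FreeMonoid.toList p)

/-- Cyclic derivative of a monomial: `∂_x(p) = ∑_{p = u x v} v u`. -/
def cycDerWord (x : Fin n) (p : List (Fin n)) : FA k n :=
  ∑ i ∈ Finset.range p.length,
    if p[i]? = some x then word (p.drop (i + 1) ++ p.take i) else 0

/-- Cyclic derivative `∂_x : T(V) → T(V)`, extended linearly from monomials. -/
def cycDer (x : Fin n) (f : FA k n) : FA k n :=
  f.coeff.sum fun p a => a • cycDerWord x (FreeMonoid.toList p)

/-- Ordinary partial derivative of a monomial: `∂p/∂x = ∑_{p = u x v} u ⊗ v`. -/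
def pderWord (x : Fin n) (p : List (Fin n)) : FA k n ⊗[k] FA k n :=
  ∑ i ∈ Finset.range p.length,
    if p[i]? = some x then (word (p.take i)) ⊗ₜ[k] (word (p.drop (i + 1))) else 0

/-- Ordinary partial derivative `∂/∂x : T(V) → T(V) ⊗ T(V)`, extended linearly. -/
def pder (x : Fin n) (f : FA k n) : FA k n ⊗[k] FA k n :=
  f.coeff.sum fun p a => a • pderWord x (FreeMonoid.toList p)

/-- `f` is homogeneous of degree `r`: every monomial in its support is a word of length `r`. -/
def IsHomog (r : ℕ) (f : FA k n) : Prop :=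
  ∀ p ∈ f.coeff.support, (FreeMonoid.toList p).length = r

end FA

namespace FA

variable {k : Type*} [CommRing k] {n : ℕ}

def seg (p : List (Fin n)) (a b : ℕ) : List (Fin n) :=
  if a < b then (p.take b).drop (a+1) else p.drop (a+1) ++ p.take b

lemma drop_len {p : List (Fin n)} {i : ℕ} (hi : i < p.length) :
    (p.drop (i+1)).length = p.length - 1 - i := by simp; omega

lemma rot_length {p : List (Fin n)} {i : ℕ} (hi : i < p.length) :
    (p.drop (i+1) ++ p.take i).length = p.length - 1 := by simp; omega

lemma rot_getElem? {p : List (Fin n)} {i m : ℕ} (hi : i < p.length) (hm : m < p.length - 1) :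
    (p.drop (i+1) ++ p.take i)[m]? =
      p[if m < p.length - 1 - i then i + 1 + m else m - (p.length - 1 - i)]? := by
  rw [List.getElem?_append, drop_len hi]
  split_ifs with h
  · rw [List.getElem?_drop]
  · rw [List.getElem?_take, if_pos (by omega)]

lemma rot_take {p : List (Fin n)} {i m : ℕ} (hi : i < p.length) (hm : m < p.length - 1) :
    (p.drop (i+1) ++ p.take i).take m =
      seg p i (if m < p.length - 1 - i then i + 1 + m else m - (p.length - 1 - i)) := by
  split_ifs with h
  · rw [seg, if_pos (by omega), List.take_append, drop_len hi,
      Nat.sub_eq_zero_of_le (by omega), List.take_zero, List.append_nil, List.drop_take]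
    congr 1; omega
  · rw [seg, if_neg (by omega), List.take_append, drop_len hi,
      List.take_of_length_le (by rw [drop_len hi]; omega), List.take_take,
      inf_eq_left.mpr (by omega : m - (p.length - 1 - i) ≤ i)]

lemma rot_drop {p : List (Fin n)} {i m : ℕ} (hi : i < p.length) (hm : m < p.length - 1) :
    (p.drop (i+1) ++ p.take i).drop (m+1) =
      seg p (if m < p.length - 1 - i then i + 1 + m else m - (p.length - 1 - i)) i := by
  split_ifs with h
  · rw [seg, if_neg (by omega), List.drop_append, drop_len hi,
      Nat.sub_eq_zero_of_le (by omega), List.drop_zero, List.drop_drop]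
    congr 2 <;> omega
  · rw [seg, if_pos (by omega), List.drop_append, drop_len hi,
      List.drop_of_length_le (by rw [drop_len hi]; omega), List.nil_append]
    congr 1; omega

lemma pderWord_rot (x : Fin n) (p : List (Fin n)) {i : ℕ} (hi : i < p.length) :
    (pderWord x (p.drop (i+1) ++ p.take i) : FA k n ⊗[k] FA k n) =
      ∑ j ∈ (Finset.range p.length).erase i,
        if p[j]? = some x then (word (seg p i j)) ⊗ₜ[k] (word (seg p j i)) else 0 := by
  rw [pderWord, rot_length hi]
  refine Finset.sum_bij'
    (fun m _ => if m < p.length - 1 - i then i + 1 + m else m - (p.length - 1 - i))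
    (fun j _ => if i < j then j - i - 1 else j + (p.length - 1 - i)) ?_ ?_ ?_ ?_ ?_
  · intro m hm
    simp only [Finset.mem_range] at hm
    simp only [Finset.mem_erase, Finset.mem_range]
    split_ifs <;> omega
  · intro j hj
    simp only [Finset.mem_erase, Finset.mem_range] at hj
    simp only [Finset.mem_range]
    split_ifs <;> omega
  · intro m hm
    simp only [Finset.mem_range] at hm
    split_ifs <;> omega
  · intro j hj
    simp only [Finset.mem_erase, Finset.mem_range] at hj
    split_ifs <;> omega
  · intro m hm
    simp only [Finset.mem_range] at hm
    rw [rot_getElem? hi hm, rot_take hi hm, rot_drop hi hm]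


def pderL (x : Fin n) : FA k n →ₗ[k] FA k n ⊗[k] FA k n :=
  Finsupp.linearCombination k (fun p => pderWord x (FreeMonoid.toList p)) ∘ₗ
    (MonoidAlgebra.coeffLinearEquiv k).toLinearMap

lemma pder_eq (x : Fin n) (f : FA k n) : pder x f = pderL x f :=
  (Finsupp.linearCombination_apply k f.coeff).symm

def cycDerL (x : Fin n) : FA k n →ₗ[k] FA k n :=
  Finsupp.linearCombination k (fun p => cycDerWord x (FreeMonoid.toList p)) ∘ₗ
    (MonoidAlgebra.coeffLinearEquiv k).toLinearMap

lemma cycDer_eq (x : Fin n) (f : FA k n) : cycDer x f = cycDerL x f :=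
  (Finsupp.linearCombination_apply k f.coeff).symm

lemma pderL_word (x : Fin n) (q : List (Fin n)) :
    pderL x (word q : FA k n) = pderWord x q := by
  rw [← pder_eq, pder, word]
  exact (Finsupp.sum_single_index (by rw [zero_smul])).trans (one_smul k _)

lemma key (x y : Fin n) (p : List (Fin n)) :
    (TensorProduct.comm k (FA k n) (FA k n)) (pderL x (cycDerWord y p)) =
      pderL y (cycDerWord x p) := by
  have expand : ∀ (x y : Fin n),
      pderL x (cycDerWord y p : FA k n) =
        ∑ i ∈ Finset.range p.length, ∑ j ∈ Finset.range p.length,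
          if j ≠ i then (if p[i]? = some y then (if p[j]? = some x then
            (word (seg p i j)) ⊗ₜ[k] (word (seg p j i)) else 0) else 0) else 0 := by
    intro x y
    rw [cycDerWord, map_sum]
    refine Finset.sum_congr rfl fun i hi => ?_
    rw [Finset.mem_range] at hi
    split_ifs with hy
    · rw [pderL_word, pderWord_rot x p hi, ← Finset.filter_ne',
        Finset.sum_filter]
    · simp [hy]
  rw [expand x y, expand y x, map_sum]
  simp_rw [map_sum, apply_ite (TensorProduct.comm k (FA k n) (FA k n)), map_zero,
    TensorProduct.comm_tmul]
  rw [Finset.sum_comm]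
  refine Finset.sum_congr rfl fun a _ => Finset.sum_congr rfl fun b _ => ?_
  split_ifs <;> first | rfl | omega | tauto

end FA

/-- Symmetry of the non-commutative Hessian:
`τ(∂²w/∂x∂y) = ∂²w/∂y∂x`, where `∂²w/∂x∂y = (∂/∂x) ∘ ∂_y` involves the cyclic
derivative first (so that the identity holds for every representative `w` of a potential),
and `τ` is the flip of the two tensor factors. -/
theorem hessian_symm {k : Type*} [Field k] [CharZero k] (n : ℕ)
    (w : FA k n) (x y : Fin n) :
    (TensorProduct.comm k (FA k n) (FA k n)) (FA.pder x (FA.cycDer y w)) =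
      FA.pder y (FA.cycDer x w) := by
  rw [FA.pder_eq, FA.pder_eq, FA.cycDer_eq, FA.cycDer_eq]
  have h : (TensorProduct.comm k (FA k n) (FA k n)).toLinearMap ∘ₗ
      FA.pderL x ∘ₗ FA.cycDerL y = FA.pderL y ∘ₗ FA.cycDerL x := by
    refine MonoidAlgebra.lhom_ext' fun a => LinearMap.ext fun b => ?_
    simp only [LinearMap.comp_apply, LinearEquiv.coe_coe, MonoidAlgebra.lsingle_apply]
    rw [FA.cycDerL, FA.cycDerL, LinearMap.comp_apply, LinearMap.comp_apply,
      show ((MonoidAlgebra.coeffLinearEquiv k).toLinearMap : FA k n →ₗ[k] _) (MonoidAlgebra.single a b) = Finsupp.single a b from rfl,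
      Finsupp.linearCombination_single,
      Finsupp.linearCombination_single, map_smul, map_smul, map_smul,
      FA.key x y (FreeMonoid.toList a)]
  exact LinearMap.congr_fun h w
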